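/- For every a > 0, H(w_+) > 0 and H(w_-) < 0. -/

import Mathlib

open Real

/-- `H a w = (w² - 1)/2 + (2+a)(w+1) + log(-w)` -/
noncomputable def H (a w : ℝ) : ℝ := (w ^ 2 - 1) / 2 + (2 + a) * (w + 1) + Real.log (-w)

/-- `w₊ = -1 - a/2 + √(a + a²/4)` -/
noncomputable def wp (a : ℝ) : ℝ := -1 - a / 2 + Real.sqrt (a + a ^ 2 / 4)

/-- `w₋ = -1 - a/2 - √(a + a²/4)` -/
noncomputable def wm (a : ℝ) : ℝ := -1 - a / 2 - Real.sqrt (a + a ^ 2 / 4)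

lemma log_le_aux (x : ℝ) (hx : 1 ≤ x) : Real.log x ≤ (x ^ 2 - 1) / (2 * x) := by
  have hx0 : (0:ℝ) < x := lt_of_lt_of_le one_pos hx
  rw [le_div_iff₀ (by positivity)]
  set f : ℝ → ℝ := fun y => y ^ 2 - 1 - Real.log y * (2 * y) with hf
  have hd : ∀ y : ℝ, 0 < y → HasDerivAt f (2 * y - (2 + Real.log y * 2)) y := by
    intro y hy
    have h1 : HasDerivAt (fun y : ℝ => y ^ 2 - 1) (2 * y) y := by
      simpa using (hasDerivAt_pow 2 y).sub_const 1
    have h2 : HasDerivAt (fun y : ℝ => Real.log y * (2 * y))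
        (y⁻¹ * (2 * y) + Real.log y * 2) y := by
      exact ((Real.hasDerivAt_log hy.ne').mul ((hasDerivAt_id y).const_mul 2)).congr_deriv (by simp)
    have h3 : y⁻¹ * (2 * y) = 2 := by field_simp
    rw [h3] at h2
    exact h1.sub h2
  have hmono : MonotoneOn f (Set.Ici 1) := by
    apply monotoneOn_of_deriv_nonneg (convex_Ici 1)
    · apply ContinuousOn.sub
      · exact (continuous_pow 2).continuousOn.sub continuousOn_const
      · apply ContinuousOn.mul
        · exact Real.continuousOn_log.mono (by intro y hy; simp at hy ⊢; linarith)
        · exact (continuous_const.mul continuous_id).continuousOn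
    · intro y hy
      rw [interior_Ici] at hy
      exact ((hd y (lt_trans one_pos hy)).differentiableAt.differentiableWithinAt)
    · intro y hy
      rw [interior_Ici] at hy
      have hy1 : (1:ℝ) < y := hy
      have hy0 : (0:ℝ) < y := lt_trans one_pos hy1
      rw [(hd y hy0).deriv]
      have : Real.log y ≤ y - 1 := Real.log_le_sub_one_of_pos hy0
      linarith
  have h1 : f 1 ≤ f x := hmono (by simp) (by simpa using hx) hx
  simp only [hf, Real.log_one] at h1
  nlinarith [h1]

theorem stmt_4 (a : ℝ) (ha : 0 < a) :
    0 < H a (wp a) ∧ H a (wm a) < 0 := by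
  obtain ⟨s, hs⟩ : ∃ s : ℝ, s = Real.sqrt (a + a ^ 2 / 4) := ⟨_, rfl⟩
  have hs2 : s ^ 2 = a + a ^ 2 / 4 := by rw [hs]; exact Real.sq_sqrt (by positivity)
  have hs0 : 0 < s := by rw [hs]; exact Real.sqrt_pos.2 (by positivity)
  obtain ⟨u, hu⟩ : ∃ u : ℝ, u = 1 + a / 2 - s := ⟨_, rfl⟩
  obtain ⟨v, hv⟩ : ∃ v : ℝ, v = 1 + a / 2 + s := ⟨_, rfl⟩
  have hslt : s < 1 + a / 2 := by
    nlinarith [hs2, hs0, sq_nonneg (s - (1 + a / 2))]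
  have hsgt : a / 2 < s := by
    nlinarith [hs2, hs0, sq_nonneg (s - a / 2)]
  have hu0 : 0 < u := by rw [hu]; linarith
  have hu1 : u < 1 := by rw [hu]; linarith
  have hv1 : 1 < v := by rw [hv]; linarith
  have hv0 : 0 < v := lt_trans one_pos hv1
  have huv : u * v = 1 := by rw [hu, hv]; nlinarith [hs2]
  have hsum : u + v = 2 + a := by rw [hu, hv]; ring
  have hwp : wp a = -u := by rw [hu]; unfold wp; rw [← hs]; ring
  have hwm : wm a = -v := by rw [hv]; unfold wm; rw [← hs]; ring
  have hvinv : v = u⁻¹ := eq_inv_of_mul_eq_one_left (by rw [mul_comm]; exact huv)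
  have hlogv : Real.log v = -Real.log u := by rw [hvinv, Real.log_inv]
  have hHp : H a (wp a) = (u ^ 2 - 1) / 2 + (2 + a) * (1 - u) + Real.log u := by
    rw [hwp]; simp only [H, neg_neg]; ring
  have hlogbound : Real.log v ≤ (v ^ 2 - 1) / (2 * v) := log_le_aux v hv1.le
  have hlogu : (u ^ 2 - 1) / (2 * u) ≤ Real.log u := by
    have h1 : (v ^ 2 - 1) / (2 * v) = -((u ^ 2 - 1) / (2 * u)) := by
      rw [hvinv]
      field_simp
      ring
    rw [hlogv, h1] at hlogbound
    linarith
  have hid : (u ^ 2 - 1) / 2 + (2 + a) * (1 - u) + (u ^ 2 - 1) / (2 * u)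
      = (1 - u) ^ 3 / (2 * u) := by
    rw [← hsum, hvinv]
    field_simp
    ring
  have hpos : 0 < H a (wp a) := by
    rw [hHp]
    have h3 : 0 < (1 - u) ^ 3 / (2 * u) :=
      div_pos (pow_pos (by linarith) 3) (by linarith)
    linarith
  refine ⟨hpos, ?_⟩
  have hlog : Real.log u + Real.log v = 0 := by
    rw [← Real.log_mul hu0.ne' hv0.ne', huv, Real.log_one]
  have hsumH : H a (wp a) + H a (wm a) = -a ^ 2 / 2 := by
    rw [hwp, hwm]
    simp only [H, neg_neg]
    linear_combination hlog - huv + ((u + v - 2 - a) / 2) * hsum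
  nlinarith [hpos, hsumH, sq_nonneg a]
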